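/- Let R be a finite centralizing extension of a subring U, and let P be a prime ideal of R. Then P ∩ U is a prime ideal of U. -/
import Mathlib


/-- if `R = U·r₀ + ⋯ + U·r_s` is a finite centralizing extension of a subring
`U` and `P` is a prime (two-sided) ideal of `R`, then `P ∩ U` is a prime ideal of `U`; in
particular `P ∩ U ≠ U`. -/
theorem finite_centralizing_contraction_prime {R : Type*} [Ring R] (U : Subring R)
    (s : ℕ) (r : Fin (s + 1) → R)
    (hcent : ∀ i, ∀ u ∈ U, u * r i = r i * u)
    (hgen : ∀ x : R, ∃ a : Fin (s + 1) → U, x = ∑ i, (a i : R) * r i)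
    (P : TwoSidedIdeal R) (hproper : P ≠ ⊤)
    (hprime : ∀ a b : R, (∀ x : R, a * x * b ∈ P) → a ∈ P ∨ b ∈ P) :
    (¬ ∀ u : U, (u : R) ∈ P) ∧
    (∀ a b : U, (∀ x : U, ((a : R) * x * b) ∈ P) → (a : R) ∈ P ∨ (b : R) ∈ P) := by
  constructor
  · intro h
    apply hproper
    refine P.eq_top ?_
    have h1 := h 1
    simpa using h1
  · intro a b hab
    apply hprime
    intro x
    obtain ⟨c, hc⟩ := hgen x
    rw [hc, Finset.mul_sum, Finset.sum_mul]
    refine P.finsetSum_mem _ _ fun i _ => ?_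
    have : (a : R) * ((c i : R) * r i) * b = ((a : R) * c i * b) * r i := by
      rw [← mul_assoc, mul_assoc ((a:R) * (c i : R)) (r i) (b:R), ← hcent i (b:R) b.2,
        ← mul_assoc]
    rw [this]
    exact P.mul_mem_right _ _ (hab (c i))
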